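/- Let p : G̃ → G be a universal covering of a connected groupoid G and Π a subgroup of Cov(G̃/G). Then the fundamental group of the orbit groupoid G̃/Π at any object is isomorphic to Π. -/

import Mathlib

open CategoryTheory

/-- The costar `t(x)`: the set of all arrows with codomain `x`. -/
def Costar {G : Type*} [Groupoid G] (x : G) := Σ y : G, y ⟶ x

/-- The map `t(x) → t(p x)` induced by a functor `p`. -/
def costarMap {H G : Type*} [Groupoid H] [Groupoid G] (p : H ⥤ G) (x : H) :
    Costar x → Costar (p.obj x) := fun f => ⟨p.obj f.1, p.map f.2⟩

/-- `p` is a covering projection of groupoids. -/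
def IsCoveringProjection {H G : Type*} [Groupoid H] [Groupoid G] (p : H ⥤ G) : Prop :=
  ∀ x : H, Function.Bijective (costarMap p x)

/-- A groupoid is connected if any two objects are joined by an arrow. -/
def IsConnectedGroupoid (G : Type*) [Groupoid G] : Prop := ∀ x y : G, Nonempty (x ⟶ y)

/-- The induced homomorphism on vertex (fundamental) groups. -/
def vertexHom {H G : Type*} [Groupoid H] [Groupoid G] (p : H ⥤ G) (x : H) :
    (x ⟶ x) →* (p.obj x ⟶ p.obj x) where
  toFun := p.map
  map_one' := p.map_id x
  map_mul' f g := p.map_comp f g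

/-- A covering projection is regular if every image vertex subgroup is normal. -/
def IsRegularCovering {Gt G : Type*} [Groupoid Gt] [Groupoid G] (p : Gt ⥤ G) : Prop :=
  ∀ x : Gt, ((vertexHom p x).range).Normal

/-- A covering transformation: an automorphism of the total groupoid over the base. -/
def IsCoveringTransformation {Gt G : Type*} [Groupoid Gt] [Groupoid G] (p : Gt ⥤ G)
    (h : Gt ⥤ Gt) : Prop :=
  (∃ k : Gt ⥤ Gt, h ⋙ k = 𝟭 Gt ∧ k ⋙ h = 𝟭 Gt) ∧ h ⋙ p = p

/-- The group `Cov(G̃/G)` of covering transformations, as a subgroup of the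
automorphism group of `G̃` in `Cat`. -/
def covGroup {Gt G : Type*} [Groupoid Gt] [Groupoid G] (p : Gt ⥤ G) :
    Subgroup (Aut (Cat.of Gt)) where
  carrier := {h | h.hom.toFunctor ⋙ p = p}
  one_mem' := rfl
  mul_mem' := by
    intro a b ha hb
    show (b.hom.toFunctor ⋙ a.hom.toFunctor) ⋙ p = p
    refine (Functor.assoc _ _ _).trans ?_
    show b.hom.toFunctor ⋙ (a.hom.toFunctor ⋙ p) = p
    exact (congrArg (Functor.comp b.hom.toFunctor) ha).trans hb
  inv_mem' := by
    intro a ha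
    show a.inv.toFunctor ⋙ p = p
    conv_lhs => rw [← ha]
    show a.inv.toFunctor ⋙ a.hom.toFunctor ⋙ p = p
    refine (Functor.assoc _ _ _).symm.trans ?_
    have : (a.inv.toFunctor ⋙ a.hom.toFunctor) = 𝟭 _ := congrArg Cat.Hom.toFunctor a.inv_hom_id
    exact (congrArg (· ⋙ p) this).trans rfl

/-- A universal covering: a connected covering projection whose total groupoid
has trivial vertex groups. -/
def IsUniversalCovering {Gt G : Type*} [Groupoid Gt] [Groupoid G] (p : Gt ⥤ G) : Prop :=
  IsCoveringProjection p ∧ IsConnectedGroupoid Gt ∧ IsConnectedGroupoid G ∧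
    ∀ (x : Gt) (f : x ⟶ x), f = 𝟙 x

/-- A group action (by functors) on a groupoid is free if no non-identity element
fixes an object. -/
def FreeGroupoidAction {Γ : Type*} [Group Γ] {G : Type} [Groupoid.{0} G]
    (φ : Γ →* Aut (Cat.of G)) : Prop :=
  ∀ γ : Γ, γ ≠ 1 → ∀ x : G, (φ γ).hom.toFunctor.obj x ≠ x

/-- `(Q, q)` is an orbit groupoid of the action `φ` of `Γ` on `G`: the orbit
morphism `q` coequalizes the action and is universal with this property. -/
def IsOrbitGroupoid {Γ : Type*} [Group Γ] {G : Type} [Groupoid.{0} G]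
    (φ : Γ →* Aut (Cat.of G)) {Q : Type} [Groupoid.{0} Q] (q : G ⥤ Q) : Prop :=
  (∀ γ : Γ, (φ γ).hom.toFunctor ⋙ q = q) ∧
  ∀ (H : Type) (_ : Groupoid.{0} H) (f : G ⥤ H), (∀ γ : Γ, (φ γ).hom.toFunctor ⋙ f = f) →
    ∃! f' : Q ⥤ H, q ⋙ f' = f


namespace OrbitProofAux

variable {Gt : Type} [Groupoid.{0} Gt]

/-- action of an automorphism of `Cat.of Gt` on objects -/
abbrev aObj (a : Aut (Cat.of Gt)) (x : Gt) : Gt := a.hom.toFunctor.obj x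

lemma aObj_one (x : Gt) : aObj 1 x = x := rfl
lemma aObj_mul (a b : Aut (Cat.of Gt)) (x : Gt) : aObj (a * b) x = aObj a (aObj b x) := rfl

lemma aObj_inv (a : Aut (Cat.of Gt)) (x : Gt) : aObj a⁻¹ (aObj a x) = x := by
  rw [← aObj_mul, inv_mul_cancel, aObj_one]

lemma aObj_inv' (a : Aut (Cat.of Gt)) (x : Gt) : aObj a (aObj a⁻¹ x) = x := by
  rw [← aObj_mul, mul_inv_cancel, aObj_one]

variable (PP : Subgroup (Aut (Cat.of Gt)))

def orbitSetoid : Setoid Gt where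
  r x y := ∃ γ : PP, aObj γ.val x = y
  iseqv := by
    constructor
    · exact fun x => ⟨1, rfl⟩
    · rintro x y ⟨γ, h⟩
      refine ⟨γ⁻¹, ?_⟩
      show aObj (γ.val⁻¹) y = x
      rw [← h, aObj_inv]
    · rintro x y z ⟨γ, h⟩ ⟨δ, h'⟩
      refine ⟨δ * γ, ?_⟩
      show aObj (δ.val * γ.val) x = z
      rw [aObj_mul, h, h']

def Q0 : Type := Quotient (orbitSetoid PP)

instance : Quiver (Q0 PP) := ⟨fun _ _ => PP⟩

variable {PP}

/-- identify arrows in `Q0` with elements of `PP` -/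
def toPP {a b : Q0 PP} (f : a ⟶ b) : PP := f

def ofPP (a b : Q0 PP) (γ : PP) : a ⟶ b := γ

lemma toPP_ofPP (a b : Q0 PP) (γ : PP) : toPP (ofPP a b γ) = γ := rfl
lemma ofPP_toPP {a b : Q0 PP} (f : a ⟶ b) : ofPP a b (toPP f) = f := rfl
lemma toPP_inj {a b : Q0 PP} {f g : a ⟶ b} (h : toPP f = toPP g) : f = g := h

variable (PP)

instance : CategoryStruct (Q0 PP) where
  id a := ofPP a a 1
  comp f g := ofPP _ _ (toPP f * toPP g)

instance : Groupoid (Q0 PP) where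
  id_comp f := toPP_inj (one_mul (toPP f))
  comp_id f := toPP_inj (mul_one (toPP f))
  assoc f g h := toPP_inj (mul_assoc (toPP f) (toPP g) (toPP h))
  inv f := ofPP _ _ (toPP f)⁻¹
  inv_comp f := toPP_inj (inv_mul_cancel (toPP f))
  comp_inv f := toPP_inj (mul_inv_cancel (toPP f))

variable {PP}

lemma toPP_comp {a b c : Q0 PP} (f : a ⟶ b) (g : b ⟶ c) :
    toPP (f ≫ g) = toPP f * toPP g := rfl
lemma toPP_id (a : Q0 PP) : toPP (𝟙 a) = 1 := rfl
lemma toPP_eqToHom {a b : Q0 PP} (h : a = b) : toPP (eqToHom h) = 1 := by subst h; rfl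

/-- identity as a MulEquiv between the vertex group of `Q0` and `PP`. -/
def Q0.vertexEquiv (a : Q0 PP) : (a ⟶ a) ≃* PP where
  toFun := toPP
  invFun := ofPP a a
  left_inv _ := rfl
  right_inv _ := rfl
  map_mul' _ _ := rfl

variable (PP)

def q0mk (x : Gt) : Q0 PP := Quotient.mk (orbitSetoid PP) x

noncomputable def rep (a : Q0 PP) : Gt :=
  Quotient.out (s := orbitSetoid PP) a

lemma q0mk_rep (a : Q0 PP) : q0mk PP (rep PP a) = a := Quotient.out_eq a

lemma q0mk_aObj (γ : PP) (x : Gt) : q0mk PP (aObj γ.val x) = q0mk PP x := by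
  refine Quotient.sound ⟨γ⁻¹, ?_⟩
  show aObj (γ.val⁻¹) (aObj γ.val x) = x
  rw [aObj_inv]

lemma rep_exists (x : Gt) : ∃ γ : PP, aObj γ.val (rep PP (q0mk PP x)) = x :=
  Quotient.exact (q0mk_rep PP (q0mk PP x))

noncomputable def gg (x : Gt) : PP := (rep_exists PP x).choose

lemma gg_spec (x : Gt) : aObj (gg PP x).val (rep PP (q0mk PP x)) = x :=
  (rep_exists PP x).choose_spec

variable {PP}

lemma smul_cancel (hfree : ∀ (γ : PP) (x : Gt), aObj γ.val x = x → γ = 1)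
    {γ δ : PP} {z : Gt} (h : aObj γ.val z = aObj δ.val z) : γ = δ := by
  have : aObj (δ⁻¹ * γ).val z = z := by
    show aObj (δ.val⁻¹ * γ.val) z = z
    rw [aObj_mul, h, aObj_inv]
  have h1 := hfree _ _ this
  have h2 : δ * (δ⁻¹ * γ) = δ * 1 := by rw [h1]
  rwa [mul_inv_cancel_left, mul_one] at h2

lemma gg_unique (hfree : ∀ (γ : PP) (x : Gt), aObj γ.val x = x → γ = 1) {x : Gt}
    (δ : PP) (h : aObj δ.val (rep PP (q0mk PP x)) = x) :
    δ = gg PP x :=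
  smul_cancel hfree (h.trans (gg_spec PP x).symm)

lemma gg_aObj (hfree : ∀ (γ : PP) (x : Gt), aObj γ.val x = x → γ = 1) (γ : PP) (x : Gt) :
    gg PP (aObj γ.val x) = γ * gg PP x := by
  refine (gg_unique hfree _ ?_).symm
  have hrep : rep PP (q0mk PP (aObj γ.val x)) = rep PP (q0mk PP x) := by
    rw [q0mk_aObj]
  rw [hrep]
  show aObj (γ.val * (gg PP x).val) (rep PP (q0mk PP x)) = aObj γ.val x
  rw [aObj_mul, gg_spec]

lemma gg_rep (hfree : ∀ (γ : PP) (x : Gt), aObj γ.val x = x → γ = 1) (a : Q0 PP) :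
    gg PP (rep PP a) = 1 := by
  refine (gg_unique hfree _ ?_).symm
  rw [q0mk_rep]
  rfl

variable (PP)

/-- the orbit projection functor -/
noncomputable def q0 : Gt ⥤ Q0 PP where
  obj := q0mk PP
  map {x y} _ := ofPP _ _ ((gg PP x)⁻¹ * gg PP y)
  map_id x := toPP_inj (inv_mul_cancel (gg PP x))
  map_comp {x y z} f g := toPP_inj (by
    rw [toPP_comp, toPP_ofPP, toPP_ofPP, toPP_ofPP, mul_assoc, mul_inv_cancel_left])

variable {PP}

lemma q0_comm (hfree : ∀ (γ : PP) (x : Gt), aObj γ.val x = x → γ = 1) (γ : PP) :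
    γ.val.hom.toFunctor ⋙ q0 PP = q0 PP := by
  have hobj : ∀ x : Gt, (γ.val.hom.toFunctor ⋙ q0 PP).obj x = (q0 PP).obj x := fun x => q0mk_aObj PP γ x
  refine CategoryTheory.Functor.ext hobj ?_
  intro x y f
  refine toPP_inj ?_
  rw [toPP_comp, toPP_comp, toPP_eqToHom, toPP_eqToHom, one_mul, mul_one]
  change (gg PP (aObj γ.val (x : Gt)))⁻¹ * gg PP (aObj γ.val y) = (gg PP x)⁻¹ * gg PP y
  rw [gg_aObj hfree γ x, gg_aObj hfree γ y, mul_inv_rev, mul_assoc, inv_mul_cancel_left]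

section Universal

variable {H : Type} [Groupoid.{0} H]
variable (hconn : ∀ x y : Gt, Nonempty (x ⟶ y))

/-- a chosen arrow between any two objects -/
noncomputable def arr (x y : Gt) : x ⟶ y := (hconn x y).some

variable (f : Gt ⥤ H)

/-- the image under `f` of the chosen arrow -/
noncomputable def fm (x y : Gt) : f.obj x ⟶ f.obj y := f.map (arr hconn x y)

lemma fm_eq (hsub : ∀ (x y : Gt) (f g : x ⟶ y), f = g) {x y : Gt} (h : x = y) :
    fm hconn f x y = eqToHom (congrArg f.obj h) := by
  subst h
  show f.map (arr hconn x x) = _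
  rw [hsub x x (arr hconn x x) (𝟙 x), f.map_id, eqToHom_refl]

lemma fm_comp (hsub : ∀ (x y : Gt) (f g : x ⟶ y), f = g) (x y z : Gt) :
    fm hconn f x y ≫ fm hconn f y z = fm hconn f x z := by
  show f.map _ ≫ f.map _ = f.map _
  rw [← f.map_comp, hsub x z (arr hconn x y ≫ arr hconn y z) (arr hconn x z)]

lemma fobj_aObj {PP : Subgroup (Aut (Cat.of Gt))} (hf : ∀ γ : PP, γ.val.hom.toFunctor ⋙ f = f)
    (γ : PP) (x : Gt) :
    f.obj (aObj γ.val x) = f.obj x :=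
  Functor.congr_obj (hf γ) x

lemma fm_aObj {PP : Subgroup (Aut (Cat.of Gt))}
    (hsub : ∀ (x y : Gt) (f g : x ⟶ y), f = g)
    (hf : ∀ γ : PP, γ.val.hom.toFunctor ⋙ f = f) (γ : PP) (x y : Gt) :
    fm hconn f (aObj γ.val x) (aObj γ.val y) =
      eqToHom (fobj_aObj f hf γ x) ≫ fm hconn f x y ≫
        eqToHom (fobj_aObj f hf γ y).symm := by
  have h1 : arr hconn (aObj γ.val x) (aObj γ.val y) = γ.val.hom.toFunctor.map (arr hconn x y) :=
    hsub _ _ _ _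
  show f.map _ = _
  rw [h1]
  have := Functor.congr_hom (hf γ) (arr hconn x y)
  exact this

lemma fm_aObj' {PP : Subgroup (Aut (Cat.of Gt))}
    (hsub : ∀ (x y : Gt) (f g : x ⟶ y), f = g)
    (hf : ∀ γ : PP, γ.val.hom.toFunctor ⋙ f = f) (γ : PP) (x y : Gt) :
    fm hconn f x y =
      eqToHom (fobj_aObj f hf γ x).symm ≫ fm hconn f (aObj γ.val x) (aObj γ.val y) ≫
        eqToHom (fobj_aObj f hf γ y) := by
  rw [fm_aObj hconn f hsub hf γ x y]
  simp

/-- the induced functor on the orbit groupoid -/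
noncomputable def fprime {PP : Subgroup (Aut (Cat.of Gt))}
    (hsub : ∀ (x y : Gt) (f g : x ⟶ y), f = g)
    (hf : ∀ γ : PP, γ.val.hom.toFunctor ⋙ f = f) : Q0 PP ⥤ H where
  obj a := f.obj (rep PP a)
  map {a b} u := fm hconn f (rep PP a) (aObj (toPP u).val (rep PP b)) ≫
      eqToHom (fobj_aObj f hf (toPP u) (rep PP b))
  map_id a := by
    show fm hconn f (rep PP a) (rep PP a) ≫
      eqToHom (fobj_aObj f hf 1 (rep PP a)) = 𝟙 _
    rw [fm_eq hconn f hsub (rfl : rep PP a = rep PP a)]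
    simp
  map_comp {a b c} u v := by
    show fm hconn f (rep PP a) (aObj ((toPP u * toPP v)).val (rep PP c)) ≫
        eqToHom (fobj_aObj f hf (toPP u * toPP v) (rep PP c)) =
      (fm hconn f (rep PP a) (aObj (toPP u).val (rep PP b)) ≫
        eqToHom (fobj_aObj f hf (toPP u) (rep PP b))) ≫
      (fm hconn f (rep PP b) (aObj (toPP v).val (rep PP c)) ≫
        eqToHom (fobj_aObj f hf (toPP v) (rep PP c)))
    rw [fm_aObj' hconn f hsub hf (toPP u) (rep PP b) (aObj (toPP v).val (rep PP c))]
    have hcomp : fm hconn f (rep PP a) (aObj (toPP u).val (rep PP b)) ≫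
        fm hconn f (aObj (toPP u).val (rep PP b))
          (aObj (toPP u).val (aObj (toPP v).val (rep PP c))) =
        fm hconn f (rep PP a) (aObj ((toPP u * toPP v)).val (rep PP c)) := by
      rw [fm_comp hconn f hsub]
      rfl
    rw [← hcomp]
    simp [eqToHom_trans]

end Universal


lemma aObj_inv_val {PP : Subgroup (Aut (Cat.of Gt))} (γ : PP) (x : Gt) :
    aObj (γ⁻¹).val (aObj γ.val x) = x := by
  show aObj (γ.val⁻¹) (aObj γ.val x) = x
  rw [aObj_inv]

lemma aObj_mul_val {PP : Subgroup (Aut (Cat.of Gt))} (γ δ : PP) (x : Gt) :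
    aObj (γ * δ).val x = aObj γ.val (aObj δ.val x) := rfl

lemma fm_congr {H : Type} [Groupoid.{0} H] (hconn : ∀ x y : Gt, Nonempty (x ⟶ y))
    (f : Gt ⥤ H) {x y x' y' : Gt} (hx : x = x') (hy : y = y') :
    fm hconn f x y =
      eqToHom (congrArg f.obj hx) ≫ fm hconn f x' y' ≫ eqToHom (congrArg f.obj hy).symm := by
  subst hx; subst hy; simp

lemma q0_comp_fprime {H : Type} [Groupoid.{0} H] {PP : Subgroup (Aut (Cat.of Gt))}
    (hconn : ∀ x y : Gt, Nonempty (x ⟶ y))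
    (hsub : ∀ (x y : Gt) (f g : x ⟶ y), f = g)
    (hfree : ∀ (γ : PP) (x : Gt), aObj γ.val x = x → γ = 1)
    (f : Gt ⥤ H) (hf : ∀ γ : PP, γ.val.hom.toFunctor ⋙ f = f) :
    q0 PP ⋙ fprime hconn f hsub hf = f := by
  have hobj : ∀ x : Gt, (q0 PP ⋙ fprime hconn f hsub hf).obj x = f.obj x := fun x =>
    (fobj_aObj f hf (gg PP x) (rep PP (q0mk PP x))).symm.trans
      (congrArg f.obj (gg_spec PP x))
  refine CategoryTheory.Functor.ext hobj ?_
  intro x y k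
  show fm hconn f (rep PP (q0mk PP x)) (aObj ((gg PP x)⁻¹ * gg PP y).val (rep PP (q0mk PP y))) ≫
      eqToHom (fobj_aObj f hf ((gg PP x)⁻¹ * gg PP y) (rep PP (q0mk PP y))) =
    eqToHom (hobj x) ≫ f.map k ≫ eqToHom (hobj y).symm
  have hx' : rep PP (q0mk PP x) = aObj ((gg PP x)⁻¹).val x := by
    conv_lhs => rw [← aObj_inv_val (gg PP x) (rep PP (q0mk PP x)), gg_spec]
  have hy' : aObj ((gg PP x)⁻¹ * gg PP y).val (rep PP (q0mk PP y)) =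
      aObj ((gg PP x)⁻¹).val y := by
    rw [aObj_mul_val, gg_spec]
  rw [fm_congr hconn f hx' hy', fm_aObj hconn f hsub hf ((gg PP x)⁻¹) x y,
    hsub x y k (arr hconn x y)]
  show _ = eqToHom (hobj x) ≫ fm hconn f x y ≫ eqToHom (hobj y).symm
  simp [eqToHom_trans]
  rfl

lemma q0_epi {H : Type} [Groupoid.{0} H] {PP : Subgroup (Aut (Cat.of Gt))}
    (hconn : ∀ x y : Gt, Nonempty (x ⟶ y))
    (hfree : ∀ (γ : PP) (x : Gt), aObj γ.val x = x → γ = 1)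
    {f₁ f₂ : Q0 PP ⥤ H} (h : q0 PP ⋙ f₁ = q0 PP ⋙ f₂) : f₁ = f₂ := by
  have hobj : ∀ a : Q0 PP, f₁.obj a = f₂.obj a := by
    intro a
    have h1 : q0mk PP (rep PP a) = a := q0mk_rep PP a
    calc f₁.obj a = f₁.obj (q0mk PP (rep PP a)) := by rw [h1]
    _ = f₂.obj (q0mk PP (rep PP a)) := Functor.congr_obj h (rep PP a)
    _ = f₂.obj a := by rw [h1]
  refine CategoryTheory.Functor.ext hobj ?_
  intro a b u
  set k := arr hconn (rep PP a) (aObj (toPP u).val (rep PP b)) with hk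
  have he1 : a = (q0 PP).obj (rep PP a) := (q0mk_rep PP a).symm
  have he2 : (q0 PP).obj (aObj (toPP u).val (rep PP b)) = b :=
    (q0mk_aObj PP (toPP u) (rep PP b)).trans (q0mk_rep PP b)
  have hu : u = eqToHom he1 ≫ (q0 PP).map k ≫ eqToHom he2 := by
    refine toPP_inj ?_
    rw [toPP_comp, toPP_comp, toPP_eqToHom, toPP_eqToHom, one_mul, mul_one]
    show toPP u = (gg PP (rep PP a))⁻¹ * gg PP (aObj (toPP u).val (rep PP b))
    rw [gg_rep hfree, gg_aObj hfree, gg_rep hfree, inv_one, one_mul, mul_one]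
  have h2 := Functor.congr_hom h k
  simp only [Functor.comp_map] at h2
  rw [hu]
  simp only [Functor.map_comp, eqToHom_map, h2]
  simp [eqToHom_trans]

/-- transporting vertex groups along an isomorphism of groupoids -/
noncomputable def vertexEquivOfIso {Q R : Type} [Groupoid.{0} Q] [Groupoid.{0} R]
    (u : Q ⥤ R) (v : R ⥤ Q) (h1 : u ⋙ v = 𝟭 Q) (h2 : v ⋙ u = 𝟭 R) (x : Q) :
    (x ⟶ x) ≃* (u.obj x ⟶ u.obj x) where
  toFun g := u.map g
  invFun k := eqToHom (Functor.congr_obj h1 x).symm ≫ v.map k ≫ eqToHom (Functor.congr_obj h1 x)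
  left_inv g := by
    show eqToHom (Functor.congr_obj h1 x).symm ≫ v.map (u.map g) ≫
      eqToHom (Functor.congr_obj h1 x) = g
    have h3 := Functor.congr_hom h1 g
    simp only [Functor.comp_map, Functor.id_map] at h3
    rw [h3]
    simp
  right_inv k := by
    show u.map (eqToHom (Functor.congr_obj h1 x).symm ≫ v.map k ≫
      eqToHom (Functor.congr_obj h1 x)) = k
    simp only [Functor.map_comp, eqToHom_map]
    have h3 := Functor.congr_hom h2 k
    simp only [Functor.comp_map, Functor.id_map] at h3
    rw [h3]
    simp
  map_mul' g g' := by
    show u.map (g ≫ g') = u.map g ≫ u.map g'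
    exact u.map_comp g g'

end OrbitProofAux

lemma OrbitProofAux.free_of_covering {Gt G : Type} [Groupoid.{0} Gt] [Groupoid.{0} G]
    (p : Gt ⥤ G) (hp : IsUniversalCovering p)
    (hsub : ∀ (x y : Gt) (f g : x ⟶ y), f = g)
    (PP : Subgroup (Aut (Cat.of Gt))) (hPP : PP ≤ covGroup p)
    (γ : PP) (x : Gt) (h : aObj γ.val x = x) : γ = 1 := by
  obtain ⟨hcov, hconn, hconnG, htriv⟩ := hp
  have hcomm : γ.val.hom.toFunctor ⋙ p = p := hPP γ.2
  have hobj : ∀ y : Gt, γ.val.hom.toFunctor.obj y = y := by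
    intro y
    have hinj := (hcov x).1
    set k : y ⟶ x := (hconn y x).some with hkdef
    have hfst : p.obj (γ.val.hom.toFunctor.obj y) = p.obj y := Functor.congr_obj hcomm y
    have e1 : costarMap p x ⟨γ.val.hom.toFunctor.obj y, γ.val.hom.toFunctor.map k ≫ eqToHom h⟩ =
        costarMap p x ⟨y, k⟩ := by
      show (⟨p.obj (γ.val.hom.toFunctor.obj y), p.map (γ.val.hom.toFunctor.map k ≫ eqToHom h)⟩ : Costar (p.obj x)) =
        ⟨p.obj y, p.map k⟩
      refine Sigma.ext hfst ?_
      have h2 := Functor.congr_hom hcomm k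
      change p.map (γ.val.hom.toFunctor.map k) = _ at h2
      have e2 : p.map (γ.val.hom.toFunctor.map k ≫ eqToHom h) = eqToHom hfst ≫ p.map k := by
        rw [p.map_comp (γ.val.hom.toFunctor.map k) (eqToHom h), eqToHom_map p h, h2]
        simp [eqToHom_trans]
      rw [e2]
      exact eqToHom_comp_heq _ _
    have e3 := hinj e1
    exact congrArg Sigma.fst e3
  have hF : γ.val.hom.toFunctor = 𝟭 Gt :=
    CategoryTheory.Functor.ext hobj (fun X Y f => hsub _ _ _ _)
  have hval : γ.val = 1 := Iso.ext (Cat.Hom.ext hF)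
  exact Subtype.ext hval


theorem fundamental_group_of_orbit_groupoid {Gt G : Type}
    [Groupoid.{0} Gt] [Groupoid.{0} G]
    (p : Gt ⥤ G) (hp : IsUniversalCovering p)
    (PP : Subgroup (Aut (Cat.of Gt))) (hPP : PP ≤ covGroup p)
    {Q : Type} [Groupoid.{0} Q] (s : Gt ⥤ Q)
    (hs : IsOrbitGroupoid PP.subtype s) :
    ∀ x : Q, Nonempty ((x ⟶ x) ≃* PP) := by
  intro x
  have hconn : ∀ a b : Gt, Nonempty (a ⟶ b) := hp.2.1
  have hsub : ∀ (a b : Gt) (f g : a ⟶ b), f = g := by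
    intro a b f g
    have h1 : f ≫ Groupoid.inv g = 𝟙 a := hp.2.2.2 a _
    calc f = (f ≫ Groupoid.inv g) ≫ g := by
          rw [Category.assoc, Groupoid.inv_comp, Category.comp_id]
    _ = g := by rw [h1, Category.id_comp]
  have hfree : ∀ (γ : PP) (z : Gt), OrbitProofAux.aObj γ.val z = z → γ = 1 :=
    fun γ z hz => OrbitProofAux.free_of_covering p hp hsub PP hPP γ z hz
  obtain ⟨u, hu, huniq⟩ := hs.2 (OrbitProofAux.Q0 PP) inferInstance (OrbitProofAux.q0 PP)
      (fun γ => OrbitProofAux.q0_comm hfree γ)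
  have hfs : ∀ γ : PP, γ.val.hom.toFunctor ⋙ s = s := fun γ => hs.1 γ
  set v := OrbitProofAux.fprime hconn s hsub hfs with hv
  have hqv : OrbitProofAux.q0 PP ⋙ v = s :=
    OrbitProofAux.q0_comp_fprime hconn hsub hfree s hfs
  obtain ⟨w, hw, hwuniq⟩ := hs.2 Q inferInstance s hs.1
  have h1 : u ⋙ v = 𝟭 Q := by
    have e1 : s ⋙ (u ⋙ v) = s := by rw [← Functor.assoc, hu, hqv]
    rw [hwuniq (u ⋙ v) e1, hwuniq (𝟭 Q) (Functor.comp_id s)]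
  have h2 : v ⋙ u = 𝟭 (OrbitProofAux.Q0 PP) := by
    refine OrbitProofAux.q0_epi hconn hfree ?_
    rw [← Functor.assoc, hqv, hu, Functor.comp_id]
  exact ⟨(OrbitProofAux.vertexEquivOfIso u v h1 h2 x).trans
    (OrbitProofAux.Q0.vertexEquiv (u.obj x))⟩
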